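/- Let ξ≥0, μ>0, γ>0, ρ>0, κ>0, ν>0, α>1, ω>1 with α+ω = αω, and let M be the 4×4 matrix [[-μ, -(γ+μ), ωκ, -(γ+μ)ξ], [0, 0, 0, (γ+μ)ξ], [-ακ, -ακ, -(ακ+ωκ+μ), -ακ], [0, 0, 0, -(ρ+μ)]] (the Jacobian of the reduced SIRWJS system at the disease free equilibrium with β = γ+μ). Then the vector w = ( -Q₁/((ακ+μ)(ωκ+μ)(ρ+μ)), 1, Q₀/((ακ+μ)(ωκ+μ)), 0 ) satisfies M w = 0, and the vector v = (0, 1, 0, ξ(γ+μ)/(ρ+μ)) satisfies vᵀ M = 0; i.e. w and v are right and left eigenvectors of M for the eigenvalue 0. -/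

import Mathlib

open Matrix

/-- Right and left eigenvectors for the zero eigenvalue of the Jacobian of the
reduced SIRWJS system at the disease free equilibrium at the critical
transmission rate `β* = γ + μ`. -/
theorem sirwjs_DFE_critical_eigenvectors
    (ξ μ γ ρ κ ν α ω : ℝ)
    (hξ : 0 ≤ ξ) (hμ : 0 < μ) (hγ : 0 < γ) (hρ : 0 < ρ)
    (hκ : 0 < κ) (hν : 0 < ν) (hα : 1 < α) (hω : 1 < ω)
    (hαω : α + ω = α * ω)
    (η Q₀ Q₁ : ℝ)
    (hη : η = α + ω)
    (hQ₀ : Q₀ = α * κ * γ)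
    (hQ₁ : Q₁ = ((γ + μ) * (η * κ + μ) + η * κ ^ 2) * (ρ + μ))
    (M : Matrix (Fin 4) (Fin 4) ℝ)
    (hM : M = !![-μ, -(γ + μ), ω * κ, -(γ + μ) * ξ;
                 0, 0, 0, (γ + μ) * ξ;
                 -α * κ, -α * κ, -(α * κ + ω * κ + μ), -α * κ;
                 0, 0, 0, -(ρ + μ)])
    (w v : Fin 4 → ℝ)
    (hw : w = ![-Q₁ / ((α * κ + μ) * (ω * κ + μ) * (ρ + μ)), 1,
                Q₀ / ((α * κ + μ) * (ω * κ + μ)), 0])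
    (hv : v = ![0, 1, 0, ξ * (γ + μ) / (ρ + μ)]) :
    M.mulVec w = 0 ∧ Matrix.vecMul v M = 0 := by
  have h1 : (α * κ + μ) ≠ 0 := by positivity
  have h2 : (ω * κ + μ) ≠ 0 := by positivity
  have h3 : (ρ + μ) ≠ 0 := by positivity
  subst hη hQ₀ hQ₁ hM hw hv
  constructor
  · funext i
    fin_cases i
    · simp [Matrix.mulVec, dotProduct, Fin.sum_univ_four]
      field_simp
      linear_combination (μ * κ ^ 2) * hαω
    · simp [Matrix.mulVec, dotProduct, Fin.sum_univ_four]
    · simp [Matrix.mulVec, dotProduct, Fin.sum_univ_four]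
      field_simp
      linear_combination (α * κ ^ 3) * hαω
    · simp [Matrix.mulVec, dotProduct, Fin.sum_univ_four]
  · funext i
    fin_cases i
    · simp [Matrix.vecMul, dotProduct, Fin.sum_univ_four]
    · simp [Matrix.vecMul, dotProduct, Fin.sum_univ_four]
    · simp [Matrix.vecMul, dotProduct, Fin.sum_univ_four]
    · simp [Matrix.vecMul, dotProduct, Fin.sum_univ_four]
      field_simp
      ring
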